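/- For any density matrix ρ on a finite-dimensional Hilbert space and any orthonormal basis, the von Neumann entropy of ρ is at most the Shannon entropy of the diagonal of ρ in that basis: S_q(ρ) ≤ S(diag(ρ)). -/

import Mathlib

open scoped ComplexOrder

noncomputable def eta (x : ℝ) : ℝ := -(x * Real.log x)

noncomputable def shannon {I : Type} [Fintype I] (p : I → ℝ) : ℝ := ∑ i, eta (p i)

noncomputable def vonNeumann {d : ℕ} {ρ : Matrix (Fin d) (Fin d) ℂ}
    (h : ρ.IsHermitian) : ℝ := ∑ i, eta (h.eigenvalues i)

lemma eta_eq_negMulLog (x : ℝ) : eta x = Real.negMulLog x := by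
  simp [eta, Real.negMulLog, neg_mul]

/-- for a density matrix, the von Neumann entropy is at most the
Shannon entropy of the diagonal in any fixed basis. -/
theorem stmt5 {d : ℕ} (ρ : Matrix (Fin d) (Fin d) ℂ)
    (hρ : ρ.PosSemidef) (htr : ρ.trace = 1) :
    vonNeumann hρ.1 ≤ shannon (fun i => (ρ i i).re) := by
  classical
  set h := hρ.1 with hh
  set U : Matrix (Fin d) (Fin d) ℂ := (h.eigenvectorUnitary : Matrix (Fin d) (Fin d) ℂ) with hU
  set lam : Fin d → ℝ := h.eigenvalues with hlam
  set w : Fin d → Fin d → ℝ := fun i j => Complex.normSq (U i j) with hw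
  have hw_nonneg : ∀ i j, 0 ≤ w i j := fun i j => Complex.normSq_nonneg _
  -- unitarity
  have hUU : U * star U = 1 := (Matrix.mem_unitaryGroup_iff).mp h.eigenvectorUnitary.2
  have hUU' : star U * U = 1 := (Matrix.mem_unitaryGroup_iff').mp h.eigenvectorUnitary.2
  have hrow : ∀ i, ∑ j, w i j = 1 := by
    intro i
    have := congrArg (fun M => M i i) hUU
    simp only [Matrix.mul_apply, Matrix.one_apply_eq, Matrix.star_apply] at this
    have := congrArg Complex.re this
    simpa [Complex.mul_conj, w, Complex.re_sum] using this
  have hcol : ∀ j, ∑ i, w i j = 1 := by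
    intro j
    have := congrArg (fun M => M j j) hUU'
    simp only [Matrix.mul_apply, Matrix.one_apply_eq, Matrix.star_apply] at this
    have := congrArg Complex.re this
    simpa [mul_comm, Complex.mul_conj, w, Complex.re_sum] using this
  -- diagonal entries
  have hdiag : ∀ i, (ρ i i).re = ∑ j, w i j * lam j := by
    intro i
    have hsp := h.spectral_theorem
    have : ρ i i = ∑ j, U i j * (lam j : ℂ) * (starRingEnd ℂ) (U i j) := by
      conv_lhs => rw [hsp]
      simp [Matrix.mul_apply, Matrix.diagonal, Matrix.star_apply, Finset.sum_mul,
        Function.comp, hU, Matrix.IsHermitian.eigenvectorUnitary_apply, hlam]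
    rw [this, Complex.re_sum]
    congr 1; ext j
    have : U i j * (lam j : ℂ) * (starRingEnd ℂ) (U i j)
        = (lam j : ℂ) * (U i j * (starRingEnd ℂ) (U i j)) := by ring
    rw [this, Complex.mul_conj]
    simp [w, mul_comm]
  -- Jensen
  have key : ∀ i, ∑ j, w i j * eta (lam j) ≤ eta ((ρ i i).re) := by
    intro i
    rw [hdiag i]
    simp only [eta_eq_negMulLog]
    have := Real.concaveOn_negMulLog.le_map_sum
      (t := Finset.univ) (w := w i) (p := lam)
      (fun j _ => hw_nonneg i j) (hrow i)
      (fun j _ => hρ.eigenvalues_nonneg j)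
    simpa [smul_eq_mul] using this
  calc vonNeumann h = ∑ j, (∑ i, w i j) * eta (lam j) := by
        simp [vonNeumann, hcol, hlam]
    _ = ∑ i, ∑ j, w i j * eta (lam j) := by
        rw [Finset.sum_comm]; simp [Finset.sum_mul]
    _ ≤ ∑ i, eta ((ρ i i).re) := Finset.sum_le_sum (fun i _ => key i)
    _ = shannon (fun i => (ρ i i).re) := rfl
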